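/- For the sign embedder y = x + sgn(ρ)√D·u with u ∈ {−1,+1}^n, the squared normalized correlation between u and y equals (|ρ| + √D)²/((|ρ| + √D)² + (α² − ρ²)), where α² = (1/n)Σx_i² and ρ = (1/n)Σx_iu_i. -/
import Mathlib


open Finset

/-- for the sign embedder y = x + sgn(ρ)√D·u, the squared
normalized correlation between u and y equals
(|ρ| + √D)²/((|ρ| + √D)² + (α² − ρ²)). -/
theorem stmt_9 (n : ℕ) (hn : 1 ≤ n) (x u : Fin n → ℝ) (D : ℝ) (hD : 0 < D)
    (hu : ∀ i, u i = 1 ∨ u i = -1)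
    (α2 ρ : ℝ)
    (hα2 : α2 = (1/(n:ℝ)) * ∑ i, (x i)^2)
    (hρ : ρ = (1/(n:ℝ)) * ∑ i, x i * u i)
    (y : Fin n → ℝ)
    (hy : y = fun i => x i + (if 0 ≤ ρ then (1:ℝ) else -1) * Real.sqrt D * u i)
    (hy0 : ∑ i, (y i)^2 ≠ 0) :
    ((∑ i, u i * y i) / (Real.sqrt (∑ i, (u i)^2) * Real.sqrt (∑ i, (y i)^2)))^2
      = (|ρ| + Real.sqrt D)^2 / ((|ρ| + Real.sqrt D)^2 + (α2 - ρ^2)) := by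
  have hn0 : (n:ℝ) ≠ 0 := Nat.cast_ne_zero.mpr (by omega)
  set s : ℝ := if 0 ≤ ρ then (1:ℝ) else -1 with hs
  have hs2 : s^2 = 1 := by
    by_cases h : 0 ≤ ρ <;> simp [hs, h]
  have hsρ : s * ρ = |ρ| := by
    by_cases h : 0 ≤ ρ
    · simp [hs, h, abs_of_nonneg h]
    · simp [hs, h, abs_of_neg (lt_of_not_ge h)]
  have hu2 : ∀ i, (u i)^2 = 1 := by
    intro i; rcases hu i with h | h <;> simp [h]
  have hsu : ∑ i, (u i)^2 = (n:ℝ) := by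
    simp [hu2]
  have hxu : ∑ i, x i * u i = (n:ℝ) * ρ := by
    rw [hρ]; field_simp
  have hx2 : ∑ i, (x i)^2 = (n:ℝ) * α2 := by
    rw [hα2]; field_simp
  have hsq : Real.sqrt D ^ 2 = D := Real.sq_sqrt hD.le
  subst hy
  have h1 : ∑ i, u i * (x i + s * Real.sqrt D * u i)
      = (n:ℝ) * ρ + s * Real.sqrt D * (n:ℝ) := by
    have : ∀ i, u i * (x i + s * Real.sqrt D * u i)
        = x i * u i + s * Real.sqrt D * (u i)^2 := by intro i; ring
    rw [Finset.sum_congr rfl (fun i _ => this i), Finset.sum_add_distrib,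
      ← Finset.mul_sum, hxu, hsu]
  have h2 : ∑ i, (x i + s * Real.sqrt D * u i)^2
      = (n:ℝ) * α2 + 2 * s * Real.sqrt D * ((n:ℝ) * ρ) + D * (n:ℝ) := by
    have : ∀ i, (x i + s * Real.sqrt D * u i)^2
        = (x i)^2 + 2 * s * Real.sqrt D * (x i * u i)
          + s^2 * Real.sqrt D ^ 2 * (u i)^2 := by intro i; ring
    rw [Finset.sum_congr rfl (fun i _ => this i), Finset.sum_add_distrib,
      Finset.sum_add_distrib, ← Finset.mul_sum, ← Finset.mul_sum,
      hxu, hx2, hsu, hs2, hsq]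
    ring
  have hyn : (0:ℝ) ≤ ∑ i, (x i + s * Real.sqrt D * u i)^2 :=
    Finset.sum_nonneg fun i _ => sq_nonneg _
  have hun : (0:ℝ) ≤ ∑ i, (u i)^2 :=
    Finset.sum_nonneg fun i _ => sq_nonneg _
  rw [div_pow, mul_pow, Real.sq_sqrt hun, Real.sq_sqrt hyn, h1, h2, hsu]
  have key : (|ρ| + Real.sqrt D)^2 = ρ^2 + 2*(s*ρ)*Real.sqrt D + D := by
    rw [add_sq, sq_abs, hsρ, hsq]
  have hnum : ((n:ℝ) * ρ + s * Real.sqrt D * (n:ℝ))^2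
      = (n:ℝ)^2 * (|ρ| + Real.sqrt D)^2 := by
    rw [key]
    have h : ((n:ℝ) * ρ + s * Real.sqrt D * (n:ℝ))^2
        = (n:ℝ)^2 * (ρ^2 + 2*(s*ρ)*Real.sqrt D + s^2 * Real.sqrt D ^ 2) := by ring
    rw [h, hs2, hsq]; ring
  have hden : (n:ℝ) * ((n:ℝ) * α2 + 2 * s * Real.sqrt D * ((n:ℝ) * ρ) + D * (n:ℝ))
      = (n:ℝ)^2 * ((|ρ| + Real.sqrt D)^2 + (α2 - ρ^2)) := by
    rw [key]; ring
  rw [hnum, hden, mul_div_mul_left _ _ (by positivity : ((n:ℝ)^2) ≠ 0)]
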